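/- Let N₁ < N₂ be real numbers, let ε, μ : [N₁, N₂] → ℝ be continuous with ε(x) > 0 and μ(x) > 0 for all x, and let ω ∈ ℂ with ω ≠ 0. Suppose ψ, F : [N₁, N₂] → ℂ are differentiable and satisfy ψ'(x) = μ(x)·F(x) and F'(x) = −ω²·ε(x)·ψ(x) for all x ∈ [N₁, N₂], together with the outgoing boundary conditions F(N₁) + i·ω·ψ(N₁) = 0 and F(N₂) − i·ω·ψ(N₂) = 0. If ψ is not identically zero on [N₁, N₂], then Im ω < 0. -/

import Mathlib

open Set intervalIntegral

/-- A nonzero resonance of the finite photonic structure with outgoing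
boundary conditions has negative imaginary part. -/
theorem resonance_negative_imaginary_part
    (N₁ N₂ : ℝ) (hN : N₁ < N₂)
    (ε μ : ℝ → ℝ)
    (hεc : ContinuousOn ε (Set.Icc N₁ N₂)) (hμc : ContinuousOn μ (Set.Icc N₁ N₂))
    (hεpos : ∀ x ∈ Set.Icc N₁ N₂, 0 < ε x)
    (hμpos : ∀ x ∈ Set.Icc N₁ N₂, 0 < μ x)
    (ω : ℂ) (hω : ω ≠ 0)
    (ψ F : ℝ → ℂ)
    (hψ : ∀ x ∈ Set.Icc N₁ N₂, HasDerivAt ψ ((μ x : ℂ) * F x) x)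
    (hF : ∀ x ∈ Set.Icc N₁ N₂, HasDerivAt F (-ω ^ 2 * (ε x : ℂ) * ψ x) x)
    (hbc₁ : F N₁ + Complex.I * ω * ψ N₁ = 0)
    (hbc₂ : F N₂ - Complex.I * ω * ψ N₂ = 0)
    (hnz : ∃ x ∈ Set.Icc N₁ N₂, ψ x ≠ 0) :
    ω.im < 0 := by
  by_contra hcon
  push_neg at hcon
  -- continuity of ψ and F
  have hψcont : ContinuousOn ψ (Set.Icc N₁ N₂) := fun x hx =>
    ((hψ x hx).continuousAt).continuousWithinAt
  have hFcont : ContinuousOn F (Set.Icc N₁ N₂) := fun x hx =>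
    ((hF x hx).continuousAt).continuousWithinAt
  set P : ℝ → ℝ := fun x => μ x * Complex.normSq (F x) with hP
  set Q : ℝ → ℝ := fun x => ε x * Complex.normSq (ψ x) with hQ
  have hPc : ContinuousOn P (Set.Icc N₁ N₂) :=
    hμc.mul (Complex.continuous_normSq.comp_continuousOn hFcont)
  have hQc : ContinuousOn Q (Set.Icc N₁ N₂) :=
    hεc.mul (Complex.continuous_normSq.comp_continuousOn hψcont)
  set M : ℝ := ∫ x in N₁..N₂, P x with hM
  set E : ℝ := ∫ x in N₁..N₂, Q x with hE
  -- the derivative of conj ψ * F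
  have hG : ∀ x ∈ Set.Icc N₁ N₂, HasDerivAt (fun y => (starRingEnd ℂ) (ψ y) * F y)
      ((P x : ℂ) - ω ^ 2 * (Q x : ℂ)) x := by
    intro x hx
    have h1 := ((hψ x hx).star).mul (hF x hx)
    convert h1 using 1
    case e'_4 => rfl
    case e'_8 => rfl
    have e1 : (ψ x) * (starRingEnd ℂ) (ψ x) = (Complex.normSq (ψ x) : ℂ) := Complex.mul_conj _
    have e2 : (F x) * (starRingEnd ℂ) (F x) = (Complex.normSq (F x) : ℂ) := Complex.mul_conj _
    simp only [hP, hQ, Complex.star_def, map_mul, Complex.conj_ofReal]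
    push_cast
    linear_combination -((μ x : ℂ)) * e2 + ω ^ 2 * (ε x : ℂ) * e1
  have iP : IntervalIntegrable (fun x => (P x : ℂ)) MeasureTheory.volume N₁ N₂ := by
    exact (Complex.continuous_ofReal.comp_continuousOn hPc).intervalIntegrable_of_Icc hN.le
  have iQ : IntervalIntegrable (fun x => ω ^ 2 * (Q x : ℂ)) MeasureTheory.volume N₁ N₂ := by
    exact (continuousOn_const.mul
      (Complex.continuous_ofReal.comp_continuousOn hQc)).intervalIntegrable_of_Icc hN.le
  have hint : ∫ x in N₁..N₂, ((P x : ℂ) - ω ^ 2 * (Q x : ℂ))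
      = (starRingEnd ℂ) (ψ N₂) * F N₂ - (starRingEnd ℂ) (ψ N₁) * F N₁ := by
    refine intervalIntegral.integral_eq_sub_of_hasDerivAt (fun x hx => hG x ?_) (iP.sub iQ)
    rwa [Set.uIcc_of_le hN.le] at hx
  have hsplit : ∫ x in N₁..N₂, ((P x : ℂ) - ω ^ 2 * (Q x : ℂ))
      = (M : ℂ) - ω ^ 2 * (E : ℂ) := by
    rw [intervalIntegral.integral_sub iP iQ, intervalIntegral.integral_const_mul,
      intervalIntegral.integral_ofReal, intervalIntegral.integral_ofReal]
  set B : ℝ := Complex.normSq (ψ N₁) + Complex.normSq (ψ N₂) with hB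
  have key : Complex.I * ω * (B : ℂ) = (M : ℂ) - ω ^ 2 * (E : ℂ) := by
    rw [← hsplit, hint, hB]
    push_cast
    have e1 : (ψ N₁) * (starRingEnd ℂ) (ψ N₁) = (Complex.normSq (ψ N₁) : ℂ) := Complex.mul_conj _
    have e2 : (ψ N₂) * (starRingEnd ℂ) (ψ N₂) = (Complex.normSq (ψ N₂) : ℂ) := Complex.mul_conj _
    linear_combination ((starRingEnd ℂ) (ψ N₁)) * hbc₁ - ((starRingEnd ℂ) (ψ N₂)) * hbc₂
      - Complex.I * ω * e1 - Complex.I * ω * e2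
  -- positivity facts
  obtain ⟨x₀, hx₀, hψx₀⟩ := hnz
  have hEpos : 0 < E := by
    refine intervalIntegral.integral_pos hN hQc (fun x hx => ?_) ⟨x₀, hx₀, ?_⟩
    · exact mul_nonneg (hεpos x (Set.Ioc_subset_Icc_self hx)).le (Complex.normSq_nonneg _)
    · exact mul_pos (hεpos x₀ hx₀) (Complex.normSq_pos.mpr hψx₀)
  have hMnn : 0 ≤ M :=
    intervalIntegral.integral_nonneg hN.le (fun x hx =>
      mul_nonneg (hμpos x hx).le (Complex.normSq_nonneg _))
  have hBnn : 0 ≤ B := add_nonneg (Complex.normSq_nonneg _) (Complex.normSq_nonneg _)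
  -- real and imaginary parts
  rw [Complex.ext_iff] at key
  obtain ⟨hre, him⟩ := key
  simp only [Complex.mul_re, Complex.mul_im, Complex.I_re, Complex.I_im, Complex.ofReal_re,
    Complex.ofReal_im, Complex.sub_re, Complex.sub_im, pow_two] at hre him
  set a : ℝ := ω.re
  set b : ℝ := ω.im
  by_cases ha : a = 0
  · have hbne : b ≠ 0 := fun hb0 => hω (Complex.ext ha hb0)
    have hbpos : 0 < b := lt_of_le_of_ne hcon (Ne.symm hbne)
    rw [ha] at hre
    nlinarith [hre, mul_nonneg hbpos.le hBnn, mul_pos (mul_pos hbpos hbpos) hEpos]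
  · -- from the imaginary part, a * (B + 2 b E) = 0, hence B = 0
    have h2 : a * (B + 2 * b * E) = 0 := by linear_combination him
    have h3 : B + 2 * b * E = 0 := (mul_eq_zero.mp h2).resolve_left ha
    have hB0 : B = 0 := by nlinarith [mul_nonneg hcon hEpos.le]
    have hψ1 : ψ N₁ = 0 := by
      have hns : Complex.normSq (ψ N₁) = 0 := by
        have := Complex.normSq_nonneg (ψ N₁)
        have := Complex.normSq_nonneg (ψ N₂)
        simp only [hB] at hB0
        linarith
      exact Complex.normSq_eq_zero.mp hns
    have hF1 : F N₁ = 0 := by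
      have h := hbc₁
      rw [hψ1] at h
      simpa using h
    -- Gronwall: ψ ≡ 0 on [N₁, N₂], contradiction
    obtain ⟨C₁, hC₁⟩ := IsCompact.exists_bound_of_continuousOn isCompact_Icc hμc
    obtain ⟨C₂, hC₂⟩ := IsCompact.exists_bound_of_continuousOn isCompact_Icc hεc
    have hC₁0 : 0 ≤ C₁ := le_trans (norm_nonneg (μ N₁)) (hC₁ N₁ (Set.left_mem_Icc.mpr hN.le))
    have hC₂0 : 0 ≤ C₂ := le_trans (norm_nonneg (ε N₁)) (hC₂ N₁ (Set.left_mem_Icc.mpr hN.le))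
    set K : ℝ := max C₁ (‖ω‖ ^ 2 * C₂) with hK
    set g : ℝ → ℂ × ℂ := fun t => (ψ t, F t) with hg
    have hgc : ContinuousOn g (Set.Icc N₁ N₂) := hψcont.prodMk hFcont
    have hg' : ∀ t ∈ Set.Ico N₁ N₂,
        HasDerivWithinAt g (((μ t : ℂ) * F t, -ω ^ 2 * (ε t : ℂ) * ψ t)) (Set.Ici t) t :=
      fun t ht => (((hψ t (Set.Ico_subset_Icc_self ht)).prodMk
        (hF t (Set.Ico_subset_Icc_self ht)))).hasDerivWithinAt
    have hbound : ∀ t ∈ Set.Ico N₁ N₂,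
        ‖((μ t : ℂ) * F t, -ω ^ 2 * (ε t : ℂ) * ψ t)‖ ≤ K * ‖g t‖ + 0 := by
      intro t ht
      have htI : t ∈ Set.Icc N₁ N₂ := Set.Ico_subset_Icc_self ht
      have hF' : ‖F t‖ ≤ ‖g t‖ := le_max_right _ _
      have hψ' : ‖ψ t‖ ≤ ‖g t‖ := le_max_left _ _
      have h1 : ‖(μ t : ℂ) * F t‖ ≤ K * ‖g t‖ := by
        rw [norm_mul, Complex.norm_real]
        calc ‖μ t‖ * ‖F t‖ ≤ C₁ * ‖g t‖ :=
              mul_le_mul (hC₁ t htI) hF' (norm_nonneg _) hC₁0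
          _ ≤ K * ‖g t‖ := mul_le_mul_of_nonneg_right (le_max_left _ _) (norm_nonneg _)
      have h2 : ‖-ω ^ 2 * (ε t : ℂ) * ψ t‖ ≤ K * ‖g t‖ := by
        rw [norm_mul, norm_mul, norm_neg, norm_pow, Complex.norm_real]
        calc ‖ω‖ ^ 2 * ‖ε t‖ * ‖ψ t‖ ≤ ‖ω‖ ^ 2 * C₂ * ‖g t‖ :=
              mul_le_mul (mul_le_mul_of_nonneg_left (hC₂ t htI) (sq_nonneg _)) hψ'
                (norm_nonneg _) (mul_nonneg (sq_nonneg _) hC₂0)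
          _ ≤ K * ‖g t‖ := mul_le_mul_of_nonneg_right (le_max_right _ _) (norm_nonneg _)
      rw [add_zero]
      exact max_le h1 h2
    have hga : ‖g N₁‖ ≤ 0 := by
      simp [hg, hψ1, hF1, Prod.norm_def]
    have hgr := norm_le_gronwallBound_of_norm_deriv_right_le hgc hg' hga hbound x₀ hx₀
    rw [gronwallBound_ε0_δ0] at hgr
    have hψ0 : ‖ψ x₀‖ ≤ 0 := le_trans (le_max_left _ _) hgr
    exact hψx₀ (norm_le_zero_iff.mp hψ0)
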